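/- For every integer n ≥ 1, each of the triples (p,q,r) = (2n+1, 4n+1, 4n+3), (2n+1, 3n+2, 6n+1), (2n+1, 3n+1, 6n+5), and (4n+3, 5n+4, 20n+11) satisfies pq + pr − qr = 1 and consists of pairwise relatively prime positive integers; likewise, for every integer p ≥ 2, the triple (p, p+1, p²+p−1) satisfies this identity and is pairwise relatively prime. -/
import Mathlib


/-- A triple of positive integers `(p,q,r)` satisfies the identity `pq + pr − qr = 1`
and is pairwise relatively prime. -/
def GoodTriple (p q r : ℤ) : Prop :=
  0 < p ∧ 0 < q ∧ 0 < r ∧ p * q + p * r - q * r = 1 ∧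
    IsCoprime p q ∧ IsCoprime p r ∧ IsCoprime q r

/-- For every integer `n ≥ 1`, each of the triples
`(2n+1, 4n+1, 4n+3)`, `(2n+1, 3n+2, 6n+1)`, `(2n+1, 3n+1, 6n+5)`, `(4n+3, 5n+4, 20n+11)`
satisfies `pq + pr − qr = 1` and consists of pairwise relatively prime positive integers;
likewise for `(p, p+1, p²+p−1)` for every integer `p ≥ 2`. -/
theorem stmt_4 :
    (∀ n : ℤ, 1 ≤ n → GoodTriple (2 * n + 1) (4 * n + 1) (4 * n + 3)) ∧
    (∀ n : ℤ, 1 ≤ n → GoodTriple (2 * n + 1) (3 * n + 2) (6 * n + 1)) ∧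
    (∀ n : ℤ, 1 ≤ n → GoodTriple (2 * n + 1) (3 * n + 1) (6 * n + 5)) ∧
    (∀ n : ℤ, 1 ≤ n → GoodTriple (4 * n + 3) (5 * n + 4) (20 * n + 11)) ∧
    (∀ p : ℤ, 2 ≤ p → GoodTriple p (p + 1) (p ^ 2 + p - 1)) := by
  refine ⟨fun n hn => ?_, fun n hn => ?_, fun n hn => ?_, fun n hn => ?_, fun p hp => ?_⟩
  · exact ⟨by linarith, by linarith, by linarith, by ring,
      ⟨2, -1, by ring⟩, ⟨-2, 1, by ring⟩, ⟨2 * n + 1, -(2 * n), by ring⟩⟩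
  · exact ⟨by linarith, by linarith, by linarith, by ring,
      ⟨-3, 2, by ring⟩, ⟨3 * n + 2, -(n + 1), by ring⟩, ⟨-(4 * n), 2 * n + 1, by ring⟩⟩
  · exact ⟨by linarith, by linarith, by linarith, by ring,
      ⟨3, -2, by ring⟩, ⟨-(3 * n + 4), n + 1, by ring⟩, ⟨-(4 * n + 4), 2 * n + 1, by ring⟩⟩
  · exact ⟨by linarith, by linarith, by linarith, by ring,
      ⟨-5, 4, by ring⟩, ⟨-(15 * n + 7), 3 * n + 2, by ring⟩,
      ⟨-(16 * n + 8), 4 * n + 3, by ring⟩⟩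
  · exact ⟨by linarith, by linarith, by nlinarith, by ring,
      ⟨-1, 1, by ring⟩, ⟨p + 1, -1, by ring⟩, ⟨p, -1, by ring⟩⟩
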